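/- Let V be a vertex operator algebra and W = ⊕_{m∈ℕ} W_{(m)} an ℕ-gradable V-module that is C_1-cofinite, i.e. dim W/C_1(W) < ∞ where C_1(W) = span{α_{-1} w : α ∈ V with wt(α) ≥ 1, w ∈ W}. Let P_W be a finite-dimensional graded complement of C_1(W) in W. Then W = span_ℂ { α^1_{-1} ⋯ α^k_{-1} w : w ∈ P_W, α^j ∈ V_{≥1}, k ≥ 0 }; in particular W is a finitely generated V-module and each graded piece W_{(m)} is finite-dimensional. -/
import Mathlib

open DirectSum

lemma sup_map_fd {W : Type*} [AddCommGroup W] [Module ℂ W]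
    (T : Submodule ℂ (Module.End ℂ W)) [FiniteDimensional ℂ T]
    (U : Submodule ℂ W) [FiniteDimensional ℂ U] :
    FiniteDimensional ℂ (⨆ f : T, Submodule.map (f : Module.End ℂ W) U : Submodule ℂ W) := by
  let β : T →ₗ[ℂ] U →ₗ[ℂ] W :=
    { toFun := fun f => (f : Module.End ℂ W) ∘ₗ U.subtype
      map_add' := by intro f g; ext u; simp
      map_smul' := by intro c f; ext u; simp }
  have hle : (⨆ f : T, Submodule.map (f : Module.End ℂ W) U : Submodule ℂ W)
      ≤ LinearMap.range (TensorProduct.lift β) := by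
    refine iSup_le fun f => ?_
    rintro _ ⟨u, hu, rfl⟩
    exact ⟨f ⊗ₜ ⟨u, hu⟩, by simp [β]⟩
  exact Submodule.finiteDimensional_of_le hle

theorem c1_cofinite_generation
    {W : Type*} [AddCommGroup W] [Module ℂ W]
    (ℬ : ℕ → Submodule ℂ W) (hdec : DirectSum.IsInternal ℬ)
    (T : ℕ → Submodule ℂ (Module.End ℂ W))
    (hTfin : ∀ n, FiniteDimensional ℂ (T n))
    (hThom : ∀ n, ∀ f ∈ T n, ∀ m, ∀ w ∈ ℬ m, f w ∈ ℬ (m + n))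
    (P : Submodule ℂ W) (hPfin : FiniteDimensional ℂ P)
    (hPhom : P = ⨆ m, (P ⊓ ℬ m))
    (hC1P : (⨆ (n : ℕ) (_ : 1 ≤ n) (f : T n), LinearMap.range (f : Module.End ℂ W))
        ⊔ P = ⊤) :
    (∀ Q : Submodule ℂ W, P ≤ Q →
        (∀ n, 1 ≤ n → ∀ f ∈ T n, ∀ w ∈ Q, f w ∈ Q) → Q = ⊤)
    ∧ (∀ m, FiniteDimensional ℂ (ℬ m)) := by
  classical
  haveI : DirectSum.Decomposition ℬ := hdec.chooseDecomposition
  -- the projection onto the m-th graded piece, as an endomorphism of W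
  let π : ℕ → (W →ₗ[ℂ] W) := fun m =>
    (ℬ m).subtype ∘ₗ (DirectSum.component ℂ ℕ (fun i => ℬ i) m) ∘ₗ
      (DirectSum.decomposeLinearEquiv ℬ).toLinearMap
  have hπ_apply : ∀ m (x : W), π m x = ((DirectSum.decompose ℬ x) m : W) := fun m x => rfl
  have hsame : ∀ m, ∀ x ∈ ℬ m, π m x = x := by
    intro m x hx
    rw [hπ_apply]
    exact DirectSum.decompose_of_mem_same ℬ hx
  have hne : ∀ m k, ∀ x ∈ ℬ k, k ≠ m → π m x = 0 := by
    intro m k x hx hkm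
    rw [hπ_apply]
    exact DirectSum.decompose_of_mem_ne ℬ hx hkm
  -- the space of "degree-m parts of C₁(W)"
  set D : ℕ → Submodule ℂ W := fun m =>
    ⨆ (n : ℕ) (_ : n ∈ Finset.Icc 1 m) (f : T n),
      Submodule.map (f : Module.End ℂ W) (ℬ (m - n)) with hD
  -- key homogeneity computation
  have hkey : ∀ m n, 1 ≤ n → ∀ f : T n, ∀ w : W,
      π m ((f : Module.End ℂ W) w) ∈ D m := by
    intro m n hn f w
    have hle : (⨆ k, ℬ k) ≤
        Submodule.comap ((π m) ∘ₗ (f : Module.End ℂ W)) (D m) := by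
      refine iSup_le fun k x hx => ?_
      simp only [Submodule.mem_comap, LinearMap.comp_apply]
      have hfx : (f : Module.End ℂ W) x ∈ ℬ (k + n) := hThom n f f.2 k x hx
      by_cases h : k + n = m
      · rw [hsame m _ (h ▸ hfx)]
        have hnm : n ≤ m := le_trans (Nat.le_add_left n k) h.le
        have hk : k = m - n := by omega
        refine Submodule.mem_iSup_of_mem n
          (Submodule.mem_iSup_of_mem (Finset.mem_Icc.mpr ⟨hn, hnm⟩)
            (Submodule.mem_iSup_of_mem f ⟨x, hk ▸ hx, rfl⟩))
      · rw [hne m (k + n) _ hfx h]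
        exact (D m).zero_mem
    have hw : w ∈ (⨆ k, ℬ k) := by rw [hdec.submodule_iSup_eq_top]; trivial
    exact hle hw
  -- images of C₁ under πₘ land in D m
  have hC1 : ∀ m, ∀ c ∈ (⨆ (n : ℕ) (_ : 1 ≤ n) (f : T n),
      LinearMap.range (f : Module.End ℂ W)), π m c ∈ D m := by
    intro m c hc
    have hle : (⨆ (n : ℕ) (_ : 1 ≤ n) (f : T n),
        LinearMap.range (f : Module.End ℂ W)) ≤ Submodule.comap (π m) (D m) := by
      refine iSup_le fun n => iSup_le fun hn => iSup_le fun f => ?_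
      rintro _ ⟨w, rfl⟩
      exact hkey m n hn f w
    exact hle hc
  -- images of P under πₘ land in P ⊓ ℬ m
  have hPproj : ∀ m, ∀ p ∈ P, π m p ∈ P ⊓ ℬ m := by
    intro m p hp
    have hle : P ≤ Submodule.comap (π m) (P ⊓ ℬ m) := by
      conv_lhs => rw [hPhom]
      refine iSup_le fun k x hx => ?_
      simp only [Submodule.mem_comap]
      by_cases h : k = m
      · rw [hsame m x (h ▸ hx.2)]
        exact h ▸ hx
      · rw [hne m k x hx.2 h]
        exact (P ⊓ ℬ m).zero_mem
    exact hle hp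
  -- main decomposition of graded pieces
  have hmain : ∀ m, ℬ m ≤ D m ⊔ (P ⊓ ℬ m) := by
    intro m x hx
    have hxtop : x ∈ (⊤ : Submodule ℂ W) := trivial
    rw [← hC1P] at hxtop
    obtain ⟨c, hc, p, hp, rfl⟩ := Submodule.mem_sup.mp hxtop
    have hcp : c + p = π m c + π m p := by
      rw [← map_add, hsame m _ hx]
    rw [hcp]
    exact Submodule.add_mem _ (Submodule.mem_sup_left (hC1 m c hc))
      (Submodule.mem_sup_right (hPproj m p hp))
  constructor
  · -- generation statement
    intro Q hPQ hQcl
    have hBQ : ∀ m, ℬ m ≤ Q := by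
      intro m
      induction m using Nat.strong_induction_on with
      | _ m ih =>
        refine le_trans (hmain m) (sup_le ?_ (le_trans inf_le_left hPQ))
        refine iSup_le fun n => iSup_le fun hn => iSup_le fun f => ?_
        rintro _ ⟨w, hw, rfl⟩
        obtain ⟨h1, h2⟩ := Finset.mem_Icc.mp hn
        exact hQcl n h1 f f.2 w (ih (m - n) (by omega) hw)
    rw [eq_top_iff, ← hdec.submodule_iSup_eq_top]
    exact iSup_le hBQ
  · -- finite-dimensionality
    intro m
    induction m using Nat.strong_induction_on with
    | _ m ih =>
      have hDfd : FiniteDimensional ℂ (D m) := by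
        have hDs : D m = (Finset.Icc 1 m).sup (fun n =>
            ⨆ f : T n, Submodule.map (f : Module.End ℂ W) (ℬ (m - n))) := by
          rw [Finset.sup_eq_iSup]
        rw [hDs]
        refine Finset.sup_induction (p := fun S : Submodule ℂ W => FiniteDimensional ℂ S) (finiteDimensional_bot ℂ W)
          (fun S₁ h₁ S₂ h₂ => @Submodule.finiteDimensional_sup ℂ W _ _ _ S₁ S₂ h₁ h₂) ?_
        intro n hn
        obtain ⟨h1, h2⟩ := Finset.mem_Icc.mp hn
        haveI := hTfin n
        haveI := ih (m - n) (by omega)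
        exact sup_map_fd (T n) (ℬ (m - n))
      haveI : FiniteDimensional ℂ (P ⊓ ℬ m : Submodule ℂ W) :=
        Submodule.finiteDimensional_of_le inf_le_left
      haveI : FiniteDimensional ℂ (D m ⊔ (P ⊓ ℬ m) : Submodule ℂ W) :=
        Submodule.finiteDimensional_sup _ _
      exact Submodule.finiteDimensional_of_le (hmain m)
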